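/- arXiv:1303.6416 — 2 statements merged into one kernel-verified Lean document; each statement's English description precedes it below -/
import Mathlib

section
/- Define the duality operation on SPTrees by: dual(leaf) = leaf, dual(ser(T₁,T₂)) = par(dual(T₁), dual(T₂)), and dual(par(T₁,T₂)) = ser(dual(T₁), dual(T₂)). Then for every SPTree T, if P(T) = (t, f, a, b, d, c) then P(dual(T)) = (f, t, d, c, a, b). -/
/-- Series-parallel decomposition trees: a leaf (single edge), or a series or parallel
connection of two smaller trees. -/
inductive SPTree : Type
  | leaf : SPTree
  | ser : SPTree → SPTree → SPTree
  | par : SPTree → SPTree → SPTree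

/-- The 6-tuple `(t, f, a, b, d, c)` of parameters of the two-terminal series-parallel graph
encoded by an `SPTree`: the numbers of spanning trees, 2-forests separating the terminals,
acyclic orientations, very acyclic orientations, almost totally cyclic orientations, and
totally cyclic orientations. -/
def P : SPTree → ℚ × ℚ × ℚ × ℚ × ℚ × ℚ
  | .leaf => (1, 1, 2, 0, 2, 0)
  | .ser T₁ T₂ =>
      match P T₁, P T₂ with
      | (t₁, f₁, a₁, b₁, d₁, c₁), (t₂, f₂, a₂, b₂, d₂, c₂) =>
        (t₁ * t₂, t₁ * f₂ + f₁ * t₂, a₁ * a₂,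
         a₁ * a₂ - (a₁ - b₁) * (a₂ - b₂) / 2,
         d₁ * d₂ - (d₁ - c₁) * (d₂ - c₂) / 2, c₁ * c₂)
  | .par T₁ T₂ =>
      match P T₁, P T₂ with
      | (t₁, f₁, a₁, b₁, d₁, c₁), (t₂, f₂, a₂, b₂, d₂, c₂) =>
        (t₁ * f₂ + f₁ * t₂, f₁ * f₂,
         a₁ * a₂ - (a₁ - b₁) * (a₂ - b₂) / 2, b₁ * b₂,
         d₁ * d₂, d₁ * d₂ - (d₁ - c₁) * (d₂ - c₂) / 2)

/-- The sp-duality operation on decomposition trees: swap series and parallel nodes. -/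
def SPTree.dual : SPTree → SPTree
  | .leaf => .leaf
  | .ser T₁ T₂ => .par T₁.dual T₂.dual
  | .par T₁ T₂ => .ser T₁.dual T₂.dual


theorem P_dual_aux (T : SPTree) :
    P T.dual = ((P T).2.1, (P T).1, (P T).2.2.2.2.1, (P T).2.2.2.2.2,
      (P T).2.2.1, (P T).2.2.2.1) := by
  induction T with
  | leaf => simp [P, SPTree.dual]
  | ser T₁ T₂ ih₁ ih₂ =>
      simp only [SPTree.dual, P, ih₁, ih₂, Prod.mk.injEq]
      and_intros <;> grind
  | par T₁ T₂ ih₁ ih₂ =>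
      simp only [SPTree.dual, P, ih₁, ih₂, Prod.mk.injEq]
      and_intros <;> grind

/-- Lemma 3.4 in SPTree form: the sp-dual has parameters `(f, t, d, c, a, b)` when the
original has parameters `(t, f, a, b, d, c)`. -/
theorem P_dual (T : SPTree) (t f a b d c : ℚ) (h : P T = (t, f, a, b, d, c)) :
    P T.dual = (f, t, d, c, a, b) := by
  rw [P_dual_aux, h]
end

section
/- For every SPTree T with P(T) = (t, f, a, b, d, c): t ≥ 1, f ≥ 1, a ≥ 2, d ≥ 2, a ≥ b ≥ 0, d ≥ c ≥ 0, and moreover a − b and d − c are even integers (so the recursion defining P takes values in the integers). -/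
set_option maxHeartbeats 1000000 in
theorem P_key (T : SPTree) : ∃ t f a b d c : ℤ,
    P T = ((t : ℚ), (f : ℚ), (a : ℚ), (b : ℚ), (d : ℚ), (c : ℚ)) ∧
    1 ≤ t ∧ 1 ≤ f ∧ 2 ≤ a ∧ 2 ≤ d ∧ b ≤ a ∧ 0 ≤ b ∧ c ≤ d ∧ 0 ≤ c ∧
    (∃ k : ℤ, a - b = 2 * k) ∧ (∃ k : ℤ, d - c = 2 * k) := by
  induction T with
  | leaf =>
    exact ⟨1, 1, 2, 0, 2, 0, by norm_num [P], by norm_num, by norm_num, by norm_num,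
      by norm_num, by norm_num, le_refl _, by norm_num, le_refl _, ⟨1, by ring⟩, ⟨1, by ring⟩⟩
  | ser T₁ T₂ ih₁ ih₂ =>
    obtain ⟨t₁, f₁, a₁, b₁, d₁, c₁, h₁, ht₁, hf₁, ha₁, hd₁, hba₁, hb₁, hcd₁, hc₁,
      ⟨k₁, hk₁⟩, ⟨m₁, hm₁⟩⟩ := ih₁
    obtain ⟨t₂, f₂, a₂, b₂, d₂, c₂, h₂, ht₂, hf₂, ha₂, hd₂, hba₂, hb₂, hcd₂, hc₂,
      ⟨k₂, hk₂⟩, ⟨m₂, hm₂⟩⟩ := ih₂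
    have eb₁ : b₁ = a₁ - 2 * k₁ := by omega
    have eb₂ : b₂ = a₂ - 2 * k₂ := by omega
    have ec₁ : c₁ = d₁ - 2 * m₁ := by omega
    have ec₂ : c₂ = d₂ - 2 * m₂ := by omega
    subst eb₁ eb₂ ec₁ ec₂
    have hk₁0 : 0 ≤ k₁ := by omega
    have hk₂0 : 0 ≤ k₂ := by omega
    have hm₁0 : 0 ≤ m₁ := by omega
    have hm₂0 : 0 ≤ m₂ := by omega
    have hk₁a : 2 * k₁ ≤ a₁ := by omega
    have hk₂a : 2 * k₂ ≤ a₂ := by omega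
    have hm₁d : 2 * m₁ ≤ d₁ := by omega
    have hm₂d : 2 * m₂ ≤ d₂ := by omega
    refine ⟨t₁ * t₂, t₁ * f₂ + f₁ * t₂, a₁ * a₂, a₁ * a₂ - 2 * (k₁ * k₂),
      d₁ * d₂ - 2 * (m₁ * m₂), (d₁ - 2 * m₁) * (d₂ - 2 * m₂), ?_, ?_, ?_, ?_, ?_, ?_, ?_, ?_, ?_,
      ⟨k₁ * k₂, by ring⟩, ⟨m₁ * d₂ + m₂ * d₁ - 3 * (m₁ * m₂), by ring⟩⟩
    · show P (.ser T₁ T₂) = _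
      simp only [P, h₁, h₂]
      refine Prod.ext (by push_cast; ring) (Prod.ext (by push_cast; ring)
        (Prod.ext (by push_cast; ring) (Prod.ext ?_ (Prod.ext ?_ (by push_cast; ring)))))
      · show _ = ((a₁ * a₂ - 2 * (k₁ * k₂) : ℤ) : ℚ)
        push_cast; ring
      · show _ = ((d₁ * d₂ - 2 * (m₁ * m₂) : ℤ) : ℚ)
        push_cast; ring
    · nlinarith
    · nlinarith
    · nlinarith
    · nlinarith [mul_le_mul hm₁d hm₂d (by linarith) (by linarith)]
    · nlinarith [mul_nonneg hk₁0 hk₂0]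
    · nlinarith [mul_le_mul hk₁a hk₂a (by linarith) (by linarith)]
    · nlinarith [mul_nonneg hm₁0 (by linarith : (0:ℤ) ≤ d₂ - 2 * m₂),
        mul_nonneg hm₂0 (by linarith : (0:ℤ) ≤ d₁ - 2 * m₁), mul_nonneg hm₁0 hm₂0]
    · nlinarith [mul_nonneg (by linarith : (0:ℤ) ≤ d₁ - 2 * m₁)
        (by linarith : (0:ℤ) ≤ d₂ - 2 * m₂)]
  | par T₁ T₂ ih₁ ih₂ =>
    obtain ⟨t₁, f₁, a₁, b₁, d₁, c₁, h₁, ht₁, hf₁, ha₁, hd₁, hba₁, hb₁, hcd₁, hc₁,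
      ⟨k₁, hk₁⟩, ⟨m₁, hm₁⟩⟩ := ih₁
    obtain ⟨t₂, f₂, a₂, b₂, d₂, c₂, h₂, ht₂, hf₂, ha₂, hd₂, hba₂, hb₂, hcd₂, hc₂,
      ⟨k₂, hk₂⟩, ⟨m₂, hm₂⟩⟩ := ih₂
    have eb₁ : b₁ = a₁ - 2 * k₁ := by omega
    have eb₂ : b₂ = a₂ - 2 * k₂ := by omega
    have ec₁ : c₁ = d₁ - 2 * m₁ := by omega
    have ec₂ : c₂ = d₂ - 2 * m₂ := by omega
    subst eb₁ eb₂ ec₁ ec₂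
    have hk₁0 : 0 ≤ k₁ := by omega
    have hk₂0 : 0 ≤ k₂ := by omega
    have hm₁0 : 0 ≤ m₁ := by omega
    have hm₂0 : 0 ≤ m₂ := by omega
    have hk₁a : 2 * k₁ ≤ a₁ := by omega
    have hk₂a : 2 * k₂ ≤ a₂ := by omega
    have hm₁d : 2 * m₁ ≤ d₁ := by omega
    have hm₂d : 2 * m₂ ≤ d₂ := by omega
    refine ⟨t₁ * f₂ + f₁ * t₂, f₁ * f₂, a₁ * a₂ - 2 * (k₁ * k₂), (a₁ - 2 * k₁) * (a₂ - 2 * k₂),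
      d₁ * d₂, d₁ * d₂ - 2 * (m₁ * m₂), ?_, ?_, ?_, ?_, ?_, ?_, ?_, ?_, ?_,
      ⟨k₁ * a₂ + k₂ * a₁ - 3 * (k₁ * k₂), by ring⟩, ⟨m₁ * m₂, by ring⟩⟩
    · show P (.par T₁ T₂) = _
      simp only [P, h₁, h₂]
      refine Prod.ext (by push_cast; ring) (Prod.ext (by push_cast; ring)
        (Prod.ext ?_ (Prod.ext (by push_cast; ring) (Prod.ext (by push_cast; ring) ?_))))
      · show _ = ((a₁ * a₂ - 2 * (k₁ * k₂) : ℤ) : ℚ)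
        push_cast; ring
      · show _ = ((d₁ * d₂ - 2 * (m₁ * m₂) : ℤ) : ℚ)
        push_cast; ring
    · nlinarith
    · nlinarith
    · nlinarith [mul_le_mul hk₁a hk₂a (by linarith) (by linarith)]
    · nlinarith
    · nlinarith [mul_nonneg hk₁0 (by linarith : (0:ℤ) ≤ a₂ - 2 * k₂),
        mul_nonneg hk₂0 (by linarith : (0:ℤ) ≤ a₁ - 2 * k₁), mul_nonneg hk₁0 hk₂0]
    · nlinarith [mul_nonneg (by linarith : (0:ℤ) ≤ a₁ - 2 * k₁)
        (by linarith : (0:ℤ) ≤ a₂ - 2 * k₂)]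
    · nlinarith [mul_nonneg hm₁0 hm₂0]
    · nlinarith [mul_le_mul hm₁d hm₂d (by linarith) (by linarith)]


/-- Basic bounds and parities for the parameters of an SPTree: `t, f ≥ 1`, `a, d ≥ 2`,
`a ≥ b ≥ 0`, `d ≥ c ≥ 0`, and `a - b` and `d - c` are even integers. -/
theorem P_bounds (T : SPTree) (t f a b d c : ℚ) (h : P T = (t, f, a, b, d, c)) :
    1 ≤ t ∧ 1 ≤ f ∧ 2 ≤ a ∧ 2 ≤ d ∧ b ≤ a ∧ 0 ≤ b ∧ c ≤ d ∧ 0 ≤ c ∧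
      (∃ k : ℤ, a - b = 2 * (k : ℚ)) ∧ (∃ k : ℤ, d - c = 2 * (k : ℚ)) := by

  obtain ⟨t', f', a', b', d', c', hP, ht, hf, ha, hd, hba, hb, hcd, hc, ⟨k, hk⟩, ⟨m, hm⟩⟩ :=
    P_key T
  rw [h] at hP
  obtain ⟨rfl, rfl, rfl, rfl, rfl, rfl⟩ :
      t = (t' : ℚ) ∧ f = (f' : ℚ) ∧ a = (a' : ℚ) ∧ b = (b' : ℚ) ∧ d = (d' : ℚ) ∧ c = (c' : ℚ) := by
    simpa using hP
  refine ⟨by exact_mod_cast ht, by exact_mod_cast hf, by exact_mod_cast ha, by exact_mod_cast hd,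
    by exact_mod_cast hba, by exact_mod_cast hb, by exact_mod_cast hcd, by exact_mod_cast hc,
    ⟨k, by exact_mod_cast hk⟩, ⟨m, by exact_mod_cast hm⟩⟩
end
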